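/- Let S be a type, → a relation on S, H ⊆ S a set of halting states, and s₀ : S. Consider the stuttering extension transition system on the type S ⊕ {s // s ∈ H}, with transitions: inl s ⇝ inl s' iff s → s'; inl s ⇝ inr ⟨s, h⟩ for every s ∈ H; and inr ⟨s, h⟩ ⇝ inr ⟨s, h⟩; and let p : S ⊕ {s // s ∈ H} → S send inl s to s and inr ⟨s, h⟩ to s. Then the set {p ∘ ρ | ρ : ℕ → S ⊕ {s // s ∈ H}, ρ 0 = inl s₀, ∀ k, ρ k ⇝ ρ (k+1)} equals the stuttered trace set T(→, H, s₀). -/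

import Mathlib

/-- The stuttered trace set `T(→, H, s₀)`: infinite executions from `s₀`
together with the stuttering extensions of finite executions from `s₀`
ending in `H`. -/
def StutterTraces {S : Type} (R : S → S → Prop) (H : Set S) (s₀ : S) :
    Set (ℕ → S) :=
  {w | w 0 = s₀ ∧ ∀ k, R (w k) (w (k + 1))} ∪
    {w | ∃ n : ℕ, ∃ u : Fin (n + 1) → S, u 0 = s₀ ∧
      (∀ k : Fin n, R (u k.castSucc) (u k.succ)) ∧ u (Fin.last n) ∈ H ∧
      ∀ k : ℕ, w k = if h : k ≤ n then u ⟨k, Nat.lt_succ_of_le h⟩ else u (Fin.last n)}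

/-- The transition relation of the stuttering extension on `S ⊕ {s // s ∈ H}`:
`inl s ⇝ inl s'` iff `s → s'`; `inl s ⇝ inr ⟨s, h⟩` for every `s ∈ H`; and
`inr ⟨s, h⟩ ⇝ inr ⟨s, h⟩`. -/
def stutterRel {S : Type} (R : S → S → Prop) (H : Set S) :
    S ⊕ {s // s ∈ H} → S ⊕ {s // s ∈ H} → Prop
  | Sum.inl s, Sum.inl s' => R s s'
  | Sum.inl s, Sum.inr t => s = t.1
  | Sum.inr _, Sum.inl _ => False
  | Sum.inr t, Sum.inr t' => t = t'

/-- The projection sending `inl s` and `inr ⟨s, h⟩` to `s`. -/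
def stutterProj {S : Type} (H : Set S) : S ⊕ {s // s ∈ H} → S
  | Sum.inl s => s
  | Sum.inr t => t.1

/-- The projections of the infinite executions of the stuttering extension
starting at `inl s₀` are exactly the stuttered traces `T(→, H, s₀)`. -/
theorem stutter_extension_traces {S : Type} (R : S → S → Prop) (H : Set S)
    (s₀ : S) :
    {x : ℕ → S | ∃ ρ : ℕ → S ⊕ {s // s ∈ H},
        ρ 0 = Sum.inl s₀ ∧ (∀ k, stutterRel R H (ρ k) (ρ (k + 1))) ∧
        x = stutterProj H ∘ ρ}
      = StutterTraces R H s₀ := by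
  ext x
  simp only [Set.mem_setOf_eq, StutterTraces, Set.mem_union]
  constructor
  · rintro ⟨ρ, h0, hstep, rfl⟩
    by_cases hall : ∀ k, ∃ s, ρ k = Sum.inl s
    · left
      constructor
      · simp [Function.comp, h0, stutterProj]
      · intro k
        obtain ⟨s, hs⟩ := hall k
        obtain ⟨s', hs'⟩ := hall (k + 1)
        have h := hstep k
        rw [hs, hs'] at h
        simpa [Function.comp, hs, hs', stutterProj, stutterRel] using h
    · right
      push_neg at hall
      have hP : ∃ k, ∃ t, ρ k = Sum.inr t := by
        obtain ⟨k, hk⟩ := hall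
        refine ⟨k, ?_⟩
        cases hρ : ρ k with
        | inl s => exact absurd hρ (hk s)
        | inr t => exact ⟨t, rfl⟩
      classical
      obtain ⟨N, ⟨t, ht⟩, hmin⟩ : ∃ N, (∃ t, ρ N = Sum.inr t) ∧
          ∀ k < N, ¬∃ t, ρ k = Sum.inr t :=
        ⟨Nat.find hP, Nat.find_spec hP, fun k hk => Nat.find_min hP hk⟩
      have hinl : ∀ k < N, ∃ s, ρ k = Sum.inl s := by
        intro k hk
        cases hρ : ρ k with
        | inl s => exact ⟨s, rfl⟩
        | inr t' => exact absurd ⟨t', hρ⟩ (hmin k hk)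
      have hNpos : 0 < N := by
        rcases Nat.eq_zero_or_pos N with h | h
        · rw [h, h0] at ht; exact absurd ht (by simp)
        · exact h
      obtain ⟨m, rfl⟩ : ∃ m, N = m + 1 := ⟨N - 1, (Nat.succ_pred_eq_of_pos hNpos).symm⟩
      -- for k ≥ m+1, ρ k = inr t
      have hstay : ∀ k, ρ (m + 1 + k) = Sum.inr t := by
        intro k
        induction k with
        | zero => exact ht
        | succ k ih =>
          have h := hstep (m + 1 + k)
          rw [ih] at h
          cases hρ : ρ (m + 1 + k + 1) with
          | inl s => rw [hρ] at h; exact absurd h (by simp [stutterRel])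
          | inr t' =>
            rw [hρ] at h
            have : t = t' := h
            rw [this]
      refine ⟨m, fun k => stutterProj H (ρ k), ?_, ?_, ?_, ?_⟩
      · simp [h0, stutterProj]
      · intro k
        obtain ⟨s, hs⟩ := hinl k.castSucc (by
          simpa using Nat.lt_succ_of_lt k.isLt)
        obtain ⟨s', hs'⟩ := hinl k.succ (by
          simpa using Nat.succ_lt_succ k.isLt)
        have h := hstep k
        have hcast : (k.castSucc : ℕ) = (k : ℕ) := rfl
        have hsucc : (k.succ : ℕ) = (k : ℕ) + 1 := rfl
        rw [show ((k.castSucc : Fin (m+1)) : ℕ) = (k : ℕ) from rfl] at hs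
        rw [show ((k.succ : Fin (m+1)) : ℕ) = (k : ℕ) + 1 from rfl] at hs'
        rw [hs, hs'] at h
        simpa [hs, hs', stutterProj, stutterRel] using h
      · obtain ⟨s, hs⟩ := hinl m (Nat.lt_succ_self m)
        have h := hstep m
        rw [hs, ht] at h
        have hst : s = t.1 := h
        show stutterProj H (ρ m) ∈ H
        rw [hs]
        show s ∈ H
        rw [hst]
        exact t.2
      · intro k
        by_cases hk : k ≤ m
        · simp [hk, Function.comp]
        · simp only [hk, dif_neg, not_false_iff]
          have : ∃ j, k = m + 1 + j := ⟨k - (m + 1), by omega⟩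
          obtain ⟨j, rfl⟩ := this
          obtain ⟨s, hs⟩ := hinl m (Nat.lt_succ_self m)
          have h := hstep m
          rw [hs, ht] at h
          have hst : s = t.1 := h
          show stutterProj H (ρ (m + 1 + j)) = stutterProj H (ρ m)
          rw [hstay j, hs]
          exact hst.symm
  · rintro (⟨h0, hstep⟩ | ⟨n, u, hu0, hR, hH, hw⟩)
    · exact ⟨Sum.inl ∘ x, by simp [Function.comp, h0],
        fun k => hstep k, by ext k; simp [Function.comp, stutterProj]⟩
    · classical
      refine ⟨fun k => if h : k ≤ n then Sum.inl (u ⟨k, Nat.lt_succ_of_le h⟩)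
          else Sum.inr ⟨u (Fin.last n), hH⟩, ?_, ?_, ?_⟩
      · simp [hu0]
      · intro k
        by_cases hk : k + 1 ≤ n
        · have hk' : k ≤ n := le_of_lt (Nat.lt_of_succ_le hk)
          simp only [dif_pos hk, dif_pos hk']
          exact hR ⟨k, Nat.lt_of_succ_le hk⟩
        · by_cases hk' : k ≤ n
          · have : k = n := by omega
            subst this
            simp only [dif_pos hk', dif_neg hk]
            show u _ = u (Fin.last k)
            rfl
          · simp only [dif_neg hk, dif_neg hk']
            rfl
      · ext k
        by_cases hk : k ≤ n
        · simp [hw k, hk, Function.comp, stutterProj]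
        · simp [hw k, hk, Function.comp, stutterProj]
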